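/- Size and expansion of S ∪ B(S). Let ε > 0 and suppose G is a (c,d)-regular (⌊k/(2ε)+1⌋, 1/2+ε)-expander, and let S ⊆ X with |S| ≤ k. Then |S ∪ B(S)| ≤ ⌊|S|/(2ε)⌋, and consequently every subset A ⊆ S ∪ B(S) satisfies |Γ(A)| ≥ (1/2+ε)·c·|A|. -/

import Mathlib

open Finset

namespace MP

/-- Neighborhood of a left vertex `i ∈ X`: the measurements involving `i`. -/
def nhdX {n m : ℕ} (A : Fin m → Fin n → Bool) (i : Fin n) : Finset (Fin m) :=
  Finset.univ.filter (fun j => A j i = true)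

/-- Neighborhood of a right vertex `j ∈ Y`. -/
def nhdY {n m : ℕ} (A : Fin m → Fin n → Bool) (j : Fin m) : Finset (Fin n) :=
  Finset.univ.filter (fun i => A j i = true)

/-- `Γ(S)`, the set of neighbors of `S ⊆ X`. -/
def Gam {n m : ℕ} (A : Fin m → Fin n → Bool) (S : Finset (Fin n)) : Finset (Fin m) :=
  S.biUnion (nhdX A)

/-- The measurement vector `y = A x`. -/
noncomputable def yvec {n m : ℕ} (A : Fin m → Fin n → Bool) (x : Fin n → ℝ) (j : Fin m) : ℝ :=
  ∑ i ∈ nhdY A j, x i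

/-- Message from measurement `j` to variable `i`, given current variable messages `z`:
`y_j - ∑_{k ∈ N_y(j) \ {i}} z_k`. -/
noncomputable def msgY {n m : ℕ} (A : Fin m → Fin n → Bool) (x z : Fin n → ℝ)
    (j : Fin m) (i : Fin n) : ℝ :=
  yvec A x j - ∑ k ∈ (nhdY A j).erase i, z k

/-- The algorithm's estimate `x̂^s` (equal to the variable-to-check message `m_{i→j}^s`,
which does not depend on `j`).  At odd times it is the min of incoming check messages;
at even times `s+1` it is `max(0, max of incoming check messages)`. -/
noncomputable def xhat {n m : ℕ} (A : Fin m → Fin n → Bool) (x : Fin n → ℝ) :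
    ℕ → Fin n → ℝ
  | 0 => fun _ => 0
  | s + 1 => fun i =>
      if Even (s + 1) then
        max 0 (sSup ((fun l => msgY A x (xhat A x s) l i) '' (↑(nhdX A i) : Set (Fin m))))
      else
        sInf ((fun l => msgY A x (xhat A x s) l i) '' (↑(nhdX A i) : Set (Fin m)))

/-- The variable-to-check message `m_{i→j}^s` (independent of `j`). -/
noncomputable def mXY {n m : ℕ} (A : Fin m → Fin n → Bool) (x : Fin n → ℝ)
    (s : ℕ) (i : Fin n) (_j : Fin m) : ℝ := xhat A x s i

/-- The check-to-variable message `m_{j→i}^s`. -/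
noncomputable def mYX {n m : ℕ} (A : Fin m → Fin n → Bool) (x : Fin n → ℝ)
    (s : ℕ) (j : Fin m) (i : Fin n) : ℝ := msgY A x (xhat A x s) j i

/-- `G` is `(c,d)`-regular. -/
def IsRegular {n m : ℕ} (A : Fin m → Fin n → Bool) (c d : ℕ) : Prop :=
  (∀ i, (nhdX A i).card = c) ∧ (∀ j, (nhdY A j).card = d)

/-- `G` is a `(kk, α)`-expander (w.r.t. left degree `c`). -/
def IsExpander {n m : ℕ} (A : Fin m → Fin n → Bool) (c kk : ℕ) (α : ℝ) : Prop :=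
  ∀ S : Finset (Fin n), S.card ≤ kk → α * c * S.card ≤ ((Gam A S).card : ℝ)

/-- ℓ¹ norm on `ℝⁿ`. -/
noncomputable def l1 {n : ℕ} (u : Fin n → ℝ) : ℝ := ∑ i, |u i|

/-- `z` has at most `k` nonzero entries. -/
def IsKSparse {n : ℕ} (k : ℕ) (z : Fin n → ℝ) : Prop :=
  (Finset.univ.filter (fun i => z i ≠ 0)).card ≤ k

/-- `xk` is a best `k`-sparse nonnegative approximation of `x` in ℓ¹. -/
def BestKSparse {n : ℕ} (k : ℕ) (x xk : Fin n → ℝ) : Prop :=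
  (∀ i, 0 ≤ xk i) ∧ IsKSparse k xk ∧
    ∀ z : Fin n → ℝ, (∀ i, 0 ≤ z i) → IsKSparse k z →
      l1 (fun i => x i - xk i) ≤ l1 (fun i => x i - z i)


/-- `B(S) = {i ∈ X \ S : |N_x(i) ∩ Γ(S)| > c/2}`. -/
noncomputable def Bset {n m : ℕ} (A : Fin m → Fin n → Bool) (c : ℕ) (S : Finset (Fin n)) :
    Finset (Fin n) :=
  (Finset.univ \ S).filter (fun i => (c : ℝ) / 2 < ((nhdX A i ∩ Gam A S).card : ℝ))

end MP

open MP Finset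

lemma gam_card_le' {n m c : ℕ} (A : Fin m → Fin n → Bool)
    (h : ∀ i, (nhdX A i).card = c) (U : Finset (Fin n)) :
    (Gam A U).card ≤ c * U.card := by
  calc (Gam A U).card ≤ ∑ i ∈ U, (nhdX A i).card := Finset.card_biUnion_le
    _ = c * U.card := by simp [h, mul_comm]

/-- **Size and expansion of `S ∪ B(S)`.** If `G` is a `(c,d)`-regular
`(⌊k/(2ε)+1⌋, 1/2+ε)`-expander and `|S| ≤ k`, then `|S ∪ B(S)| ≤ ⌊|S|/(2ε)⌋` and every
`A' ⊆ S ∪ B(S)` satisfies `|Γ(A')| ≥ (1/2+ε)c|A'|`. -/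
theorem size_and_expansion_of_SB (n m c d k : ℕ)
    (hn : 0 < n) (hm : 0 < m) (hc : 0 < c) (hd : 0 < d) (hk : 0 < k)
    (A : Fin m → Fin n → Bool) (ε : ℝ) (hε : 0 < ε)
    (hreg : IsRegular A c d)
    (hexp : IsExpander A c (Nat.floor ((k : ℝ) / (2 * ε) + 1)) (1 / 2 + ε))
    (S : Finset (Fin n)) (hS : S.card ≤ k) :
    (S ∪ Bset A c S).card ≤ Nat.floor ((S.card : ℝ) / (2 * ε)) ∧
    ∀ A' : Finset (Fin n), A' ⊆ S ∪ Bset A c S →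
      (1 / 2 + ε) * (c : ℝ) * (A'.card : ℝ) ≤ ((Gam A A').card : ℝ) := by
  obtain ⟨hdegX, hdegY⟩ := hreg
  have hcR : (0:ℝ) < c := by exact_mod_cast hc
  -- ε ≤ 1/2
  have hε2 : ε ≤ 1 / 2 := by
    have h1 : (1:ℕ) ≤ Nat.floor ((k:ℝ)/(2*ε) + 1) := by
      apply Nat.le_floor
      have : (0:ℝ) ≤ (k:ℝ)/(2*ε) := by positivity
      push_cast; linarith
    set i0 : Fin n := ⟨0, hn⟩
    have hcard1 : ({i0} : Finset (Fin n)).card = 1 := rfl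
    have hex := hexp {i0} (by rw [hcard1]; exact h1)
    have hub : (Gam A {i0}).card ≤ c * 1 := gam_card_le' A hdegX _
    rw [hcard1] at hex
    have : ((Gam A {i0}).card : ℝ) ≤ c := by exact_mod_cast hub.trans_eq (mul_one c)
    nlinarith
  have h2ε : (0:ℝ) < 2 * ε := by linarith
  -- S.card ≤ floor(S.card/(2ε))
  have hfloorS : S.card ≤ Nat.floor ((S.card:ℝ)/(2*ε)) := by
    apply Nat.le_floor
    rw [le_div_iff₀ h2ε]
    have hSnn : (0:ℝ) ≤ (S.card:ℝ) := by positivity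
    nlinarith
  have hfloorle : Nat.floor ((S.card:ℝ)/(2*ε)) + 1 ≤ Nat.floor ((k:ℝ)/(2*ε) + 1) := by
    have h0 : (0:ℝ) ≤ (k:ℝ)/(2*ε) := by positivity
    rw [Nat.floor_add_one h0]
    have hle : ((S.card:ℝ))/(2*ε) ≤ (k:ℝ)/(2*ε) := by
      gcongr <;> simp [hS]
    exact Nat.add_le_add_right (Nat.floor_le_floor hle) 1
  have hmain : (S ∪ Bset A c S).card ≤ Nat.floor ((S.card:ℝ)/(2*ε)) := by
    by_contra hlt
    push_neg at hlt
    set t := Nat.floor ((S.card:ℝ)/(2*ε)) + 1 with ht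
    have hSt : S.card ≤ t := by omega
    obtain ⟨T, hST, hTsub, hTcard⟩ :=
      Finset.exists_subsuperset_card_eq (n := t)
        (Finset.subset_union_left : S ⊆ S ∪ Bset A c S) hSt (by omega)
    have hTcard' : T.card = t := by omega
    -- apply expander to T
    have hexT := hexp T (by rw [hTcard']; exact hfloorle)
    -- T \ S ⊆ Bset
    have hTS : T \ S ⊆ Bset A c S := by
      intro i hi
      rw [Finset.mem_sdiff] at hi
      have := hTsub hi.1
      rw [Finset.mem_union] at this
      tauto
    -- cover Γ(T)
    set D := (T \ S).biUnion (fun i => nhdX A i \ Gam A S) with hD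
    have hcover : Gam A T ⊆ Gam A S ∪ D := by
      intro j hj
      rw [Gam, Finset.mem_biUnion] at hj
      obtain ⟨i, hiT, hji⟩ := hj
      by_cases hjS : j ∈ Gam A S
      · exact Finset.mem_union_left _ hjS
      · refine Finset.mem_union_right _ ?_
        rw [hD, Finset.mem_biUnion]
        have hiS : i ∉ S := fun h => hjS (Finset.mem_biUnion.2 ⟨i, h, hji⟩)
        exact ⟨i, Finset.mem_sdiff.2 ⟨hiT, hiS⟩, Finset.mem_sdiff.2 ⟨hji, hjS⟩⟩
    have hDcard : (D.card : ℝ) ≤ (c:ℝ)/2 * ((T \ S).card) := by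
      have h1 : (D.card : ℝ) ≤ ∑ i ∈ T \ S, ((nhdX A i \ Gam A S).card : ℝ) := by
        exact_mod_cast (Nat.cast_le.2 Finset.card_biUnion_le).trans_eq (by push_cast; ring_nf)
      have h2 : ∀ i ∈ T \ S, ((nhdX A i \ Gam A S).card : ℝ) ≤ (c:ℝ)/2 := by
        intro i hi
        have hiB := hTS hi
        rw [Bset, Finset.mem_filter] at hiB
        have hint : (c:ℝ)/2 < ((nhdX A i ∩ Gam A S).card : ℝ) := hiB.2
        have hsplit : (nhdX A i \ Gam A S).card + (nhdX A i ∩ Gam A S).card = c := by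
          rw [Finset.card_sdiff_add_card_inter, hdegX]
        have : ((nhdX A i \ Gam A S).card : ℝ) + ((nhdX A i ∩ Gam A S).card : ℝ) = c := by
          exact_mod_cast hsplit
        linarith
      calc (D.card : ℝ) ≤ ∑ i ∈ T \ S, ((nhdX A i \ Gam A S).card : ℝ) := h1
        _ ≤ ∑ _i ∈ T \ S, (c:ℝ)/2 := Finset.sum_le_sum h2
        _ = (c:ℝ)/2 * ((T \ S).card) := by rw [Finset.sum_const, nsmul_eq_mul]; ring
    have hGS : ((Gam A S).card : ℝ) ≤ (c:ℝ) * S.card := by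
      exact_mod_cast gam_card_le' A hdegX S
    have hGT : ((Gam A T).card : ℝ) ≤ ((Gam A S).card : ℝ) + (D.card : ℝ) := by
      have := Finset.card_le_card hcover
      have h3 := Finset.card_union_le (Gam A S) D
      exact_mod_cast le_trans this h3
    have hTSc : ((T \ S).card : ℝ) = (t:ℝ) - (S.card:ℝ) := by
      rw [Finset.card_sdiff_of_subset hST, hTcard']
      push_cast [Nat.cast_sub hSt]
      ring
    have hTcR : (T.card : ℝ) = (t:ℝ) := by exact_mod_cast hTcard'
    rw [hTcR] at hexT
    -- combine:  (1/2+ε) c t ≤ c S + (c/2)(t - S)  ⇒  ε t ≤ S/2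
    have hεt : ε * (t:ℝ) ≤ (S.card:ℝ)/2 := by
      have : (1/2 + ε) * (c:ℝ) * (t:ℝ) ≤ (c:ℝ) * S.card + (c:ℝ)/2 * ((t:ℝ) - (S.card:ℝ)) := by
        rw [← hTSc]; linarith
      nlinarith
    have hlt2 : ((S.card:ℝ))/(2*ε) < (t:ℝ) := by
      have := Nat.lt_floor_add_one ((S.card:ℝ)/(2*ε))
      push_cast [ht]
      push_cast at this
      linarith
    rw [div_lt_iff₀ h2ε] at hlt2
    nlinarith
  refine ⟨hmain, fun A' hA' => ?_⟩
  apply hexp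
  calc A'.card ≤ (S ∪ Bset A c S).card := Finset.card_le_card hA'
    _ ≤ Nat.floor ((S.card:ℝ)/(2*ε)) := hmain
    _ ≤ Nat.floor ((k:ℝ)/(2*ε) + 1) := by omega
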